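/- Let β = 0, γ ∈ ℝ, b > 0, let Π : [0,b) → ℝ be a Poincaré half-map datum (so V(x) = 1 − γx), and let B, α, δ ∈ ℝ with B > δ > 0 be such that X^sl(u) > 0 for all u ∈ [Π(x), x] and all x ∈ [0,b). Define Ĩ(x) = ∫_{Π(x)}^{x} u/X^sl(u) du. If α + γ(B−δ) > 0 then Ĩ(x) < 0 for all x ∈ (0,b); if α + γ(B−δ) < 0 then Ĩ(x) > 0 for all x ∈ (0,b). -/

import Mathlib

/-- The sliding vector field `X^sl(x) = (B − δ + αx)/(1 + δ)`. -/
noncomputable def Xsl (B α δ x : ℝ) : ℝ := (B - δ + α * x) / (1 + δ)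

/-- The slow divergence integral (up to a positive constant)
`Ĩ(x) = ∫_{P x}^{x} u / X^sl(u) du`. -/
noncomputable def Itil (B α δ : ℝ) (P : ℝ → ℝ) (x : ℝ) : ℝ :=
  ∫ u in (P x)..x, u / Xsl B α δ u

/-- Theorem 3.2, Statement 1: in the case `β = 0` (so `V(x) = 1 − γx`), the slow
divergence integral `Ĩ` is negative on `(0,b)` when `α + γ(B−δ) > 0` and positive
on `(0,b)` when `α + γ(B−δ) < 0`. -/
theorem slow_divergence_integral_sign_beta_zero (γ b B α δ : ℝ)
    (hb : 0 < b) (hBδ : B > δ) (hδ : δ > 0) (P : ℝ → ℝ)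
    (hdiff : DifferentiableOn ℝ P (Set.Ico 0 b))
    (hP0 : P 0 = 0)
    (hPneg : ∀ x ∈ Set.Ioo 0 b, P x < 0)
    (hV : ∀ x ∈ Set.Ioo 0 b, ∀ u ∈ Set.Icc (P x) x, 1 - γ * u > 0)
    (hint : ∀ x ∈ Set.Ioo 0 b, ∫ u in (P x)..x, u / (1 - γ * u) = 0)
    (hXsl : ∀ x ∈ Set.Ico 0 b, ∀ u ∈ Set.Icc (P x) x, Xsl B α δ u > 0) :
    (α + γ * (B - δ) > 0 → ∀ x ∈ Set.Ioo 0 b, Itil B α δ P x < 0) ∧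
    (α + γ * (B - δ) < 0 → ∀ x ∈ Set.Ioo 0 b, Itil B α δ P x > 0) := by
  have hδ1 : (0:ℝ) < 1 + δ := by linarith
  have hBd : (0:ℝ) < B - δ := by linarith
  have key : ∀ x ∈ Set.Ioo 0 b, ∃ J : ℝ, 0 < J ∧
      Itil B α δ P x = -((α + γ * (B - δ)) * ((1 + δ) / (B - δ)) * J) := by
    intro x hx
    obtain ⟨hx0, hxb⟩ := hx
    have hxI : x ∈ Set.Ico 0 b := ⟨le_of_lt hx0, hxb⟩
    have hPx : P x < 0 := hPneg x ⟨hx0, hxb⟩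
    have hax : P x ≤ x := by linarith
    set a := P x with ha
    set s := α + γ * (B - δ) with hs
    have hden1 : ∀ u ∈ Set.Icc a x, 0 < B - δ + α * u := by
      intro u hu
      have hX := hXsl x hxI u hu
      unfold Xsl at hX
      rcases (div_pos_iff.mp hX) with ⟨h1, _⟩ | ⟨_, h2⟩
      · exact h1
      · linarith
    have hden2 : ∀ u ∈ Set.Icc a x, 0 < 1 - γ * u := hV x ⟨hx0, hxb⟩
    set g : ℝ → ℝ := fun u => u ^ 2 / ((B - δ + α * u) * (1 - γ * u)) with hg
    set h : ℝ → ℝ := fun u => u / (1 - γ * u) with hh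
    set k : ℝ := (1 + δ) / (B - δ) with hk
    have hcg : ContinuousOn g (Set.Icc a x) := by
      apply ContinuousOn.div
      · fun_prop
      · fun_prop
      · intro u hu; exact mul_ne_zero (ne_of_gt (hden1 u hu)) (ne_of_gt (hden2 u hu))
    have hch : ContinuousOn h (Set.Icc a x) := by
      apply ContinuousOn.div
      · fun_prop
      · fun_prop
      · intro u hu; exact ne_of_gt (hden2 u hu)
    have hig : IntervalIntegrable g MeasureTheory.volume a x :=
      hcg.intervalIntegrable_of_Icc hax
    have hih : IntervalIntegrable h MeasureTheory.volume a x :=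
      hch.intervalIntegrable_of_Icc hax
    have hptw : Set.EqOn (fun u => u / Xsl B α δ u)
        (fun u => k * h u - (s * k) * g u) (Set.uIcc a x) := by
      intro u hu
      rw [Set.uIcc_of_le hax] at hu
      have h1 := hden1 u hu
      have h2 := hden2 u hu
      simp only [Xsl, hg, hh, hk, hs]
      have h1' : B - δ + u * α ≠ 0 := by rw [mul_comm]; exact h1.ne'
      have h2' : 1 - u * γ ≠ 0 := by rw [mul_comm]; exact h2.ne'
      field_simp [h1', h2', hδ1.ne', hBd.ne']
      ring
    have hI : Itil B α δ P x
        = k * (∫ u in a..x, h u) - (s * k) * (∫ u in a..x, g u) := by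
      unfold Itil
      rw [intervalIntegral.integral_congr hptw,
        intervalIntegral.integral_sub (hih.const_mul k) (hig.const_mul (s * k)),
        intervalIntegral.integral_const_mul, intervalIntegral.integral_const_mul]
    rw [hint x ⟨hx0, hxb⟩] at hI
    have hsub1 : Set.uIcc a (0:ℝ) ⊆ Set.uIcc a x := by
      rw [Set.uIcc_of_le (le_of_lt hPx), Set.uIcc_of_le hax]
      exact Set.Icc_subset_Icc le_rfl (le_of_lt hx0)
    have hsub2 : Set.uIcc (0:ℝ) x ⊆ Set.uIcc a x := by
      rw [Set.uIcc_of_le (le_of_lt hx0), Set.uIcc_of_le hax]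
      exact Set.Icc_subset_Icc (le_of_lt hPx) le_rfl
    have hJ : 0 < ∫ u in a..x, g u := by
      have hsplit : (∫ u in a..(0:ℝ), g u) + (∫ u in (0:ℝ)..x, g u) = ∫ u in a..x, g u :=
        intervalIntegral.integral_add_adjacent_intervals
          (hig.mono_set hsub1) (hig.mono_set hsub2)
      have h1 : 0 ≤ ∫ u in a..(0:ℝ), g u := by
        apply intervalIntegral.integral_nonneg (le_of_lt hPx)
        intro u hu
        have hu' : u ∈ Set.Icc a x := ⟨hu.1, le_trans hu.2 (le_of_lt hx0)⟩
        exact div_nonneg (sq_nonneg u) (le_of_lt (mul_pos (hden1 u hu') (hden2 u hu')))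
      have h2 : 0 < ∫ u in (0:ℝ)..x, g u := by
        apply intervalIntegral.intervalIntegral_pos_of_pos_on (hig.mono_set hsub2)
        · intro u hu
          have hu' : u ∈ Set.Icc a x :=
            ⟨le_trans (le_of_lt hPx) (le_of_lt hu.1), le_of_lt hu.2⟩
          exact div_pos (pow_pos hu.1 2) (mul_pos (hden1 u hu') (hden2 u hu'))
        · exact hx0
      linarith
    exact ⟨∫ u in a..x, g u, hJ, by rw [hI]; ring⟩
  have hkpos : 0 < (1 + δ) / (B - δ) := div_pos hδ1 hBd
  constructor
  · intro hspos x hx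
    obtain ⟨J, hJ, hEq⟩ := key x hx
    rw [hEq]
    have : 0 < (α + γ * (B - δ)) * ((1 + δ) / (B - δ)) * J :=
      mul_pos (mul_pos hspos hkpos) hJ
    linarith
  · intro hsneg x hx
    obtain ⟨J, hJ, hEq⟩ := key x hx
    rw [hEq]
    have : (α + γ * (B - δ)) * ((1 + δ) / (B - δ)) * J < 0 :=
      mul_neg_of_neg_of_pos (mul_neg_of_neg_of_pos hsneg hkpos) hJ
    linarith
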